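/- Let 𝕊 ⊆ ℝ^ℓ (ℓ ≥ 2) be a state space and let S ⊆ 𝕊 be nonempty. Then S is observationally complete for every injective (informationally complete) linear map M : ℝ^ℓ → ℝⁿ, for every n, if and only if ddi(S | 𝕊) = {𝕊}. -/

import Mathlib

open MeasureTheory Metric Set
open scoped ENNReal NNReal

noncomputable section

/-- `Euc n` is the Euclidean space `ℝⁿ`. -/
abbrev Euc (n : ℕ) : Type := EuclideanSpace ℝ (Fin n)

/-- A state space of linear dimension `ℓ`: a compact convex set contained in (and affinely
spanning) an affine hyperplane not through the origin, here written as `{x | f x = 1}`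
for a nonzero linear functional `f`. -/
def IsStateSpace {ℓ : ℕ} (𝕊 : Set (Euc ℓ)) : Prop :=
  IsCompact 𝕊 ∧ Convex ℝ 𝕊 ∧
    ∃ f : Euc ℓ →ₗ[ℝ] ℝ, f ≠ 0 ∧
      (affineSpan ℝ 𝕊 : Set (Euc ℓ)) = {x | f x = 1}

/-- `R` is admissible for the data set `X` (w.r.t. the state space `𝕊`): it is the image of `𝕊`
under some linear map and satisfies `X ⊆ R ⊆ aff X`. -/
def Admissible {ℓ n : ℕ} (𝕊 : Set (Euc ℓ)) (X R : Set (Euc n)) : Prop :=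
  (∃ M : Euc ℓ →ₗ[ℝ] Euc n, R = M '' 𝕊) ∧ X ⊆ R ∧ R ⊆ (affineSpan ℝ X : Set (Euc n))

/-- Data-driven inference: the admissible sets for `X` of minimal `d`-dimensional Hausdorff
measure, where `d = dim aff X`. -/
def ddi {ℓ n : ℕ} (X : Set (Euc n)) (𝕊 : Set (Euc ℓ)) : Set (Set (Euc n)) :=
  {R | Admissible 𝕊 X R ∧ ∀ R' : Set (Euc n), Admissible 𝕊 X R' →
      μH[(Module.finrank ℝ (affineSpan ℝ X).direction : ℝ)] R ≤
        μH[(Module.finrank ℝ (affineSpan ℝ X).direction : ℝ)] R'}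

/-- A (hyper)-ellipsoid state space in `ℝ^ℓ`: the image of the closed unit ball of `ℝ^(ℓ-1)`
under an injective affine map. -/
def IsHyperEllipsoid {ℓ : ℕ} (𝕊 : Set (Euc ℓ)) : Prop :=
  ∃ F : Euc (ℓ - 1) →ᵃ[ℝ] Euc ℓ, Function.Injective F ∧ 𝕊 = F '' closedBall 0 1

/-- `S` is observationally complete for the measurement `M` (w.r.t. state space `𝕊`). -/
def ObsComplete {ℓ n : ℕ} (𝕊 S : Set (Euc ℓ)) (M : Euc ℓ →ₗ[ℝ] Euc n) : Prop :=
  ddi (M '' S) 𝕊 = {M '' 𝕊}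

/-- Translation invariance of Hausdorff measure. -/
lemma hausdorff_vadd {n : ℕ} (v : Euc n) (d : ℝ) (A : Set (Euc n)) :
    μH[d] ((fun x => v + x) '' A) = μH[d] A := by
  have hiso : Isometry (fun x : Euc n => v + x) :=
    Isometry.of_dist_eq fun a b => dist_add_left v a b
  exact hiso.hausdorffMeasure_image (Or.inr fun y => ⟨-v + y, add_neg_cancel_left v y⟩) A

/-- Exact scaling of `d`-dimensional Hausdorff measure under an injective linear map
from `ℝ^d` to `ℝ^n`. -/
lemma scaling_of_inj {d n : ℕ} (T : Euc d →ₗ[ℝ] Euc n) (hT : Function.Injective T) :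
    ∃ c : ℝ≥0∞, c ≠ 0 ∧ c ≠ ⊤ ∧
      ∀ B : Set (Euc d), μH[(d : ℝ)] (T '' B) = c * μH[(d : ℝ)] B := by
  set W := LinearMap.range T with hW
  have hfin : Module.finrank ℝ W = d := by
    rw [hW, LinearMap.finrank_range_of_inj hT, finrank_euclideanSpace_fin]
  obtain ⟨e⟩ : Nonempty (W ≃ₗᵢ[ℝ] Euc d) := by
    rw [← hfin]; exact ⟨(stdOrthonormalBasis ℝ W).repr⟩
  set T₀ : Euc d →ₗ[ℝ] Euc d := e.toLinearEquiv.toLinearMap.comp T.rangeRestrict with hT₀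
  have hT₀app : ∀ x, T₀ x = e (T.rangeRestrict x) := fun x => rfl
  have hinj : Function.Injective T₀ := by
    intro x y hxy
    apply hT
    have h2 : T.rangeRestrict x = T.rangeRestrict y := e.injective hxy
    exact congrArg Subtype.val h2
  have hdet : LinearMap.det T₀ ≠ 0 := by
    intro h0
    have hk := LinearMap.bot_lt_ker_of_det_eq_zero h0
    rw [LinearMap.ker_eq_bot.mpr hinj] at hk
    exact lt_irrefl _ hk
  set J : Euc d →ₗᵢ[ℝ] Euc n := W.subtypeₗᵢ.comp e.symm.toLinearIsometry with hJ
  have hkey : ∀ x, T x = J (T₀ x) := by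
    intro x
    show T x = ((e.symm (e (T.rangeRestrict x)) : W) : Euc n)
    rw [e.symm_apply_apply]
    rfl
  haveI inst : (μH[(d : ℝ)] : Measure (Euc d)).IsAddHaarMeasure := by
    have h : ((Module.finrank ℝ (Euc d) : ℕ) : ℝ) = (d : ℝ) := by
      rw [finrank_euclideanSpace_fin]
    rw [← h]
    infer_instance
  refine ⟨ENNReal.ofReal |LinearMap.det T₀|, ?_, ENNReal.ofReal_ne_top, ?_⟩
  · simpa [ENNReal.ofReal_eq_zero, not_le] using abs_pos.mpr hdet
  · intro B
    have h1 : T '' B = J '' (T₀ '' B) := by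
      rw [← Set.image_comp]
      exact Set.image_congr fun x _ => hkey x
    rw [h1, J.isometry.hausdorffMeasure_image (Or.inl (by positivity)) _]
    exact MeasureTheory.Measure.addHaar_image_linearMap _ T₀ B

/-- Exact scaling of Hausdorff measure (of the right dimension) for subsets of the
affine span of `S` under an injective linear map. -/
lemma scaling_affine {ℓ n : ℕ} {S : Set (Euc ℓ)} (hne : S.Nonempty)
    (M : Euc ℓ →ₗ[ℝ] Euc n) (hM : Function.Injective M) :
    ∃ c : ℝ≥0∞, c ≠ 0 ∧ c ≠ ⊤ ∧
      ∀ A : Set (Euc ℓ), A ⊆ (affineSpan ℝ S : Set (Euc ℓ)) →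
        μH[((Module.finrank ℝ (affineSpan ℝ S).direction : ℕ) : ℝ)] (M '' A) =
          c * μH[((Module.finrank ℝ (affineSpan ℝ S).direction : ℕ) : ℝ)] A := by
  obtain ⟨s₀, hs₀⟩ := hne
  have hx₀ : s₀ ∈ affineSpan ℝ S := subset_affineSpan ℝ S hs₀
  set V := (affineSpan ℝ S).direction with hV
  set d := Module.finrank ℝ V with hd
  set eV : V ≃ₗᵢ[ℝ] Euc d := (stdOrthonormalBasis ℝ V).repr with heV
  set T : Euc d →ₗ[ℝ] Euc n :=
    (M.comp V.subtype).comp eV.symm.toLinearEquiv.toLinearMap with hTdef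
  have hT : Function.Injective T := by
    intro a b hab
    have : (eV.symm a : Euc ℓ) = (eV.symm b : Euc ℓ) := hM hab
    have h2 : eV.symm a = eV.symm b := Subtype.ext this
    exact eV.symm.injective h2
  obtain ⟨c, hc0, hct, hc⟩ := scaling_of_inj T hT
  refine ⟨c, hc0, hct, ?_⟩
  intro A hA
  set φ : Euc d → Euc ℓ := fun b => s₀ + (eV.symm b : Euc ℓ) with hφ
  have hφiso : Isometry φ := by
    apply Isometry.of_dist_eq
    intro a b
    rw [hφ]
    simp only [dist_add_left]
    rw [show dist ((eV.symm a : V) : Euc ℓ) ((eV.symm b : V) : Euc ℓ)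
        = dist (eV.symm a) (eV.symm b) from rfl]
    exact eV.symm.isometry.dist_eq a b
  have hrange : A ⊆ Set.range φ := by
    intro a ha
    have hmem : a - s₀ ∈ V := by
      have := AffineSubspace.vsub_mem_direction (hA ha) hx₀
      simpa using this
    refine ⟨eV ⟨a - s₀, hmem⟩, ?_⟩
    rw [hφ]
    simp only [eV.symm_apply_apply]
    show s₀ + (a - s₀) = a
    rw [add_comm, sub_add_cancel]
  set B : Set (Euc d) := φ ⁻¹' A with hB
  have hAB : A = φ '' B := (Set.image_preimage_eq_of_subset hrange).symm
  have hmeasA : μH[(d : ℝ)] A = μH[(d : ℝ)] B := by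
    rw [hAB]
    exact hφiso.hausdorffMeasure_image (Or.inl (by positivity)) B
  have hMA : M '' A = (fun x => M s₀ + x) '' (T '' B) := by
    rw [hAB, ← Set.image_comp, ← Set.image_comp]
    apply Set.image_congr
    intro b _
    show M (s₀ + (eV.symm b : Euc ℓ)) = M s₀ + T b
    rw [map_add]
    rfl
  rw [hMA, hausdorff_vadd, hc B, hmeasA]

/-- The dimension of the affine span is preserved under injective linear maps. -/
lemma dir_image {ℓ n : ℕ} (S : Set (Euc ℓ)) (M : Euc ℓ →ₗ[ℝ] Euc n)
    (hM : Function.Injective M) :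
    Module.finrank ℝ (affineSpan ℝ (M '' S)).direction =
      Module.finrank ℝ (affineSpan ℝ S).direction := by
  have h1 : affineSpan ℝ (⇑M '' S) = (affineSpan ℝ S).map M.toAffineMap := by
    rw [AffineSubspace.map_span]
    rfl
  rw [h1, AffineSubspace.map_direction]
  have h2 : M.toAffineMap.linear = M := rfl
  rw [h2]
  exact (LinearEquiv.finrank_eq
    (Submodule.equivMapOfInjective M hM (affineSpan ℝ S).direction)).symm

/-- The affine span of the image is the image of the affine span. -/
lemma span_image_coe {ℓ n : ℕ} (S : Set (Euc ℓ)) (M : Euc ℓ →ₗ[ℝ] Euc n) :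
    (affineSpan ℝ (M '' S) : Set (Euc n)) = M '' (affineSpan ℝ S : Set (Euc ℓ)) := by
  have h1 : affineSpan ℝ (⇑M '' S) = (affineSpan ℝ S).map M.toAffineMap := by
    rw [AffineSubspace.map_span]
    rfl
  rw [h1, AffineSubspace.coe_map]
  rfl

theorem stmt_6 {ℓ : ℕ} (hℓ : 2 ≤ ℓ) (𝕊 : Set (Euc ℓ)) (hS : IsStateSpace 𝕊)
    (S : Set (Euc ℓ)) (hsub : S ⊆ 𝕊) (hne : S.Nonempty) :
    (∀ (n : ℕ) (M : Euc ℓ →ₗ[ℝ] Euc n), Function.Injective M → ObsComplete 𝕊 S M) ↔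
      ddi S 𝕊 = {𝕊} := by
  constructor
  · intro h
    have h1 := h ℓ LinearMap.id (fun a b hab => hab)
    unfold ObsComplete at h1
    simpa [LinearMap.id_coe, Set.image_id] using h1
  · intro h n M hM
    have h𝕊mem : 𝕊 ∈ ddi S 𝕊 := by rw [h]; exact Set.mem_singleton _
    obtain ⟨hadm𝕊, hmin𝕊⟩ := h𝕊mem
    obtain ⟨g, hg⟩ := M.exists_leftInverse_of_injective (LinearMap.ker_eq_bot.mpr hM)
    have hgM : ∀ x, g (M x) = x := fun x => congrArg (fun f => f x) hg
    have haff := span_image_coe S M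
    -- Claim A: admissible sets for `M '' S` are exactly images of admissible sets for `S`.
    have hAdm : ∀ R' : Set (Euc n),
        Admissible 𝕊 (M '' S) R' ↔ ∃ R, Admissible 𝕊 S R ∧ R' = M '' R := by
      intro R'
      constructor
      · rintro ⟨⟨M', rfl⟩, hsub1, hsub2⟩
        rw [haff] at hsub2
        have hfix : ∀ x ∈ ⇑M' '' 𝕊, M (g x) = x := by
          intro x hx
          obtain ⟨a, _, rfl⟩ := hsub2 hx
          rw [hgM a]
        refine ⟨g '' (M' '' 𝕊), ⟨⟨g.comp M', by rw [LinearMap.coe_comp, Set.image_comp]⟩,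
          ?_, ?_⟩, ?_⟩
        · intro s hs
          exact ⟨M s, hsub1 ⟨s, hs, rfl⟩, hgM s⟩
        · rintro x ⟨y, hy, rfl⟩
          obtain ⟨a, ha, rfl⟩ := hsub2 hy
          rw [hgM a]
          exact ha
        · ext x
          constructor
          · intro hx
            exact ⟨g x, ⟨x, hx, rfl⟩, hfix x hx⟩
          · rintro ⟨y, ⟨z, hz, rfl⟩, rfl⟩
            rw [hfix z hz]
            exact hz
      · rintro ⟨R, ⟨⟨N, rfl⟩, hSR, hRaff⟩, rfl⟩
        refine ⟨⟨M.comp N, by rw [LinearMap.coe_comp, Set.image_comp]⟩,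
          Set.image_mono hSR, ?_⟩
        rw [haff]
        exact Set.image_mono hRaff
    obtain ⟨c, hc0, hct, hc⟩ := scaling_affine hne M hM
    have hdim : ((Module.finrank ℝ (affineSpan ℝ (⇑M '' S)).direction : ℕ) : ℝ) =
        ((Module.finrank ℝ (affineSpan ℝ S).direction : ℕ) : ℝ) := by
      rw [dir_image S M hM]
    unfold ObsComplete
    ext R'
    simp only [Set.mem_singleton_iff]
    constructor
    · rintro ⟨hadm', hmin'⟩
      obtain ⟨R, hRadm, rfl⟩ := (hAdm _).mp hadm'
      have hR : R ∈ ddi S 𝕊 := by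
        refine ⟨hRadm, fun R₂ h₂ => ?_⟩
        have h1 := hmin' (M '' R₂) ((hAdm _).mpr ⟨R₂, h₂, rfl⟩)
        rw [hdim, hc R hRadm.2.2, hc R₂ h₂.2.2] at h1
        exact (ENNReal.mul_le_mul_iff_right hc0 hct).mp h1
      rw [h, Set.mem_singleton_iff] at hR
      rw [hR]
    · rintro rfl
      refine ⟨(hAdm _).mpr ⟨𝕊, hadm𝕊, rfl⟩, ?_⟩
      intro R₂ h₂
      obtain ⟨R, hRadm, rfl⟩ := (hAdm _).mp h₂
      rw [hdim, hc 𝕊 hadm𝕊.2.2, hc R hRadm.2.2]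
      exact mul_le_mul_right (hmin𝕊 R hRadm) c
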